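/- Let S ⊆ U be nonempty and let π = {B_1, …, B_m} be a partition of U. Then the sum, over all ordered pairs (u_i, u_{i'}) with u_i, u_{i'} ∈ S lying in different blocks of π, of the squares (√(p_i p_{i'})/Pr(S))² of the indistinction-amplitudes of ρ(S) that are zeroed by the classical Lüders mixture operation equals the logical entropy of the resulting matrix: Σ_{(i,i'): u_i,u_{i'} ∈ S, u_i and u_{i'} in different blocks of π} (p_i p_{i'})/Pr(S)² = 1 − tr(ρ̂(S)²). -/

import Mathlib

open Matrix

/-- `B : ι → Finset (Fin n)` is a partition of `Fin n`: blocks are nonempty,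
pairwise disjoint, and cover the whole set. -/
structure IsPartition {n : ℕ} {ι : Type*} (B : ι → Finset (Fin n)) : Prop where
  blocks_nonempty : ∀ j, (B j).Nonempty
  blocks_disjoint : ∀ j k, j ≠ k → Disjoint (B j) (B k)
  blocks_cover : ∀ i, ∃ j, i ∈ B j

/-- The (classical) density matrix `ρ(S)` of a subset `S ⊆ U`:
entries `√(pᵢ pᵢ')/Pr(S)` when both indices are in `S`, else `0`. -/
noncomputable def rhoS {n : ℕ} (p : Fin n → ℝ) (S : Finset (Fin n)) :
    Matrix (Fin n) (Fin n) ℝ :=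
  Matrix.of fun i i' =>
    if i ∈ S ∧ i' ∈ S then Real.sqrt (p i * p i') / (∑ k ∈ S, p k) else 0

/-- The diagonal 0–1 projection matrix `P_B` of a subset `B`. -/
def projM {n : ℕ} (B : Finset (Fin n)) : Matrix (Fin n) (Fin n) ℝ :=
  Matrix.of fun i i' => if i = i' ∧ i ∈ B then 1 else 0

/-- The classical Lüders mixture operation `ρ ↦ Σ_j P_{B_j} ρ P_{B_j}`. -/
noncomputable def luders {n : ℕ} {ι : Type*} [Fintype ι] (B : ι → Finset (Fin n))
    (ρ : Matrix (Fin n) (Fin n) ℝ) : Matrix (Fin n) (Fin n) ℝ :=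
  ∑ j, projM (B j) * ρ * projM (B j)

/-- The density matrix `ρ(π) = Σ_j Pr(B_j) ρ(B_j)` of a partition. -/
noncomputable def rhoPart {n : ℕ} {ι : Type*} [Fintype ι] (p : Fin n → ℝ)
    (B : ι → Finset (Fin n)) : Matrix (Fin n) (Fin n) ℝ :=
  ∑ j, (∑ i ∈ B j, p i) • rhoS p (B j)

/-- The logical entropy `h(π) = 1 - Σ_j Pr(B_j)²` of a partition. -/
def logEntropy {n : ℕ} {ι : Type*} [Fintype ι] (p : Fin n → ℝ)
    (B : ι → Finset (Fin n)) : ℝ :=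
  1 - ∑ j, (∑ i ∈ B j, p i) ^ 2

/-- The dit-set of a partition: ordered pairs lying in different blocks. -/
def ditSet {n : ℕ} {ι : Type*} (B : ι → Finset (Fin n)) : Set (Fin n × Fin n) :=
  {q | ¬ ∃ j, q.1 ∈ B j ∧ q.2 ∈ B j}

/-- The indit-set of a partition: ordered pairs lying in the same block. -/
def inditSet {n : ℕ} {ι : Type*} (B : ι → Finset (Fin n)) : Set (Fin n × Fin n) :=
  {q | ∃ j, q.1 ∈ B j ∧ q.2 ∈ B j}

/-- The pure-state density matrix `ρ(ψ) = ψψ†` with entries `α_i ᾱ_{i'}`. -/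
noncomputable def rhoPsi {n : ℕ} (ψ : Fin n → ℂ) : Matrix (Fin n) (Fin n) ℂ :=
  Matrix.of fun i i' => ψ i * star (ψ i')

/-- The diagonal 0–1 projection matrix `P_B` of a subset `B` (complex version). -/
noncomputable def projC {n : ℕ} (B : Finset (Fin n)) : Matrix (Fin n) (Fin n) ℂ :=
  Matrix.of fun i i' => if i = i' ∧ i ∈ B then 1 else 0

/-- The quantum Lüders mixture operation `ρ ↦ Σ_j P_j ρ P_j`. -/
noncomputable def ludersC {n : ℕ} {ι : Type*} [Fintype ι] (B : ι → Finset (Fin n))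
    (ρ : Matrix (Fin n) (Fin n) ℂ) : Matrix (Fin n) (Fin n) ℂ :=
  ∑ j, projC (B j) * ρ * projC (B j)

lemma proj_mul {n : ℕ} (B : Finset (Fin n)) (ρ : Matrix (Fin n) (Fin n) ℝ) (i i' : Fin n) :
    (projM B * ρ * projM B) i i' = if i ∈ B ∧ i' ∈ B then ρ i i' else 0 := by
  classical
  simp [projM, Matrix.mul_apply, ite_and, Finset.sum_ite_eq, Finset.mul_sum]
  by_cases h : i ∈ B <;> by_cases h' : i' ∈ B <;> simp [h, h']

lemma luders_apply {n m : ℕ} (p : Fin n → ℝ) (B : Fin m → Finset (Fin n))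
    (hpart : IsPartition B) (S : Finset (Fin n)) (i i' : Fin n) :
    luders B (rhoS p S) i i' =
      if i ∈ S ∧ i' ∈ S ∧ ∃ j, i ∈ B j ∧ i' ∈ B j then
        Real.sqrt (p i * p i') / (∑ k ∈ S, p k) else 0 := by
  classical
  have h1 : luders B (rhoS p S) i i'
      = ∑ j, if i ∈ B j ∧ i' ∈ B j then rhoS p S i i' else 0 := by
    simp [luders, Matrix.sum_apply, proj_mul]
  rw [h1]
  by_cases hex : ∃ j, i ∈ B j ∧ i' ∈ B j
  · obtain ⟨j0, hj0⟩ := hex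
    rw [Finset.sum_eq_single j0]
    · have hex : ∃ j, i ∈ B j ∧ i' ∈ B j := ⟨j0, hj0⟩
      by_cases hiS : i ∈ S <;> by_cases hiS' : i' ∈ S <;>
        simp [rhoS, hj0, hiS, hiS', hex]
    · intro j _ hj
      have : i ∉ B j := fun h =>
        (Finset.disjoint_left.mp (hpart.blocks_disjoint j j0 hj) h) hj0.1
      simp [this]
    · simp
  · have : ∀ j, ¬ (i ∈ B j ∧ i' ∈ B j) := fun j h => hex ⟨j, h⟩
    simp [this, hex]

/-- The sum of the squares of the indistinction-amplitudes of `ρ(S)`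
zeroed by the classical Lüders mixture operation equals the logical entropy
`1 - tr(ρ̂(S)²)` of the resulting matrix. -/
theorem stmt0 {n m : ℕ} (p : Fin n → ℝ) (hp : ∀ i, 0 < p i) (hsum : ∑ i, p i = 1)
    (B : Fin m → Finset (Fin n)) (hpart : IsPartition B)
    (S : Finset (Fin n)) (hS : S.Nonempty) :
    ∑ q ∈ Finset.univ.filter
        (fun q : Fin n × Fin n =>
          q.1 ∈ S ∧ q.2 ∈ S ∧ ¬ ∃ j, q.1 ∈ B j ∧ q.2 ∈ B j),
      p q.1 * p q.2 / (∑ k ∈ S, p k) ^ 2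
    = 1 - Matrix.trace (luders B (rhoS p S) * luders B (rhoS p S)) := by
  classical
  set PrS := ∑ k ∈ S, p k with hPrS
  have hPrpos : 0 < PrS := Finset.sum_pos (fun i _ => hp i) hS
  set f : Fin n × Fin n → ℝ := fun q => p q.1 * p q.2 / PrS ^ 2 with hf
  -- trace computation
  have htr : Matrix.trace (luders B (rhoS p S) * luders B (rhoS p S))
      = ∑ q ∈ Finset.univ.filter
          (fun q : Fin n × Fin n =>
            q.1 ∈ S ∧ q.2 ∈ S ∧ ∃ j, q.1 ∈ B j ∧ q.2 ∈ B j), f q := by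
    have hterm : ∀ i k : Fin n,
        luders B (rhoS p S) i k * luders B (rhoS p S) k i
        = if i ∈ S ∧ k ∈ S ∧ ∃ j, i ∈ B j ∧ k ∈ B j then f (i, k) else 0 := by
      intro i k
      rw [luders_apply p B hpart S i k, luders_apply p B hpart S k i]
      by_cases h : i ∈ S ∧ k ∈ S ∧ ∃ j, i ∈ B j ∧ k ∈ B j
      · have h' : k ∈ S ∧ i ∈ S ∧ ∃ j, k ∈ B j ∧ i ∈ B j :=
          ⟨h.2.1, h.1, h.2.2.imp fun j hj => ⟨hj.2, hj.1⟩⟩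
        have hpk : 0 ≤ p i * p k := le_of_lt (mul_pos (hp i) (hp k))
        rw [if_pos h, if_pos h', mul_comm (p k)]
        rw [div_mul_div_comm, Real.mul_self_sqrt hpk, if_pos h]
        simp [f, sq, hPrS]
      · have h' : ¬ (k ∈ S ∧ i ∈ S ∧ ∃ j, k ∈ B j ∧ i ∈ B j) := fun hc =>
          h ⟨hc.2.1, hc.1, hc.2.2.imp fun j hj => ⟨hj.2, hj.1⟩⟩
        simp [h, h']
    rw [Finset.sum_filter]
    rw [Fintype.sum_prod_type]
    simp only [Matrix.trace, Matrix.diag, Matrix.mul_apply]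
    exact Finset.sum_congr rfl fun i _ => Finset.sum_congr rfl fun k _ => (hterm i k)
  rw [htr]
  -- total sum over S × S equals 1
  have hfull : ∑ q ∈ Finset.univ.filter
      (fun q : Fin n × Fin n => q.1 ∈ S ∧ q.2 ∈ S), f q = 1 := by
    have : Finset.univ.filter (fun q : Fin n × Fin n => q.1 ∈ S ∧ q.2 ∈ S) = S ×ˢ S := by
      ext q; simp [Finset.mem_product]
    rw [this, Finset.sum_product]
    simp only [f, div_eq_mul_inv, ← Finset.sum_mul]
    rw [← Finset.sum_mul_sum, ← hPrS, sq]
    field_simp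
  -- split the full sum
  have hsplit := Finset.sum_filter_add_sum_filter_not
    (Finset.univ.filter (fun q : Fin n × Fin n => q.1 ∈ S ∧ q.2 ∈ S))
    (fun q : Fin n × Fin n => ∃ j, q.1 ∈ B j ∧ q.2 ∈ B j) f
  rw [Finset.filter_filter, Finset.filter_filter] at hsplit
  have e1 : (Finset.univ.filter fun q : Fin n × Fin n =>
      (q.1 ∈ S ∧ q.2 ∈ S) ∧ ∃ j, q.1 ∈ B j ∧ q.2 ∈ B j)
      = (Finset.univ.filter fun q : Fin n × Fin n =>
      q.1 ∈ S ∧ q.2 ∈ S ∧ ∃ j, q.1 ∈ B j ∧ q.2 ∈ B j) := by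
    apply Finset.filter_congr; intro q _; tauto
  have e2 : (Finset.univ.filter fun q : Fin n × Fin n =>
      (q.1 ∈ S ∧ q.2 ∈ S) ∧ ¬ ∃ j, q.1 ∈ B j ∧ q.2 ∈ B j)
      = (Finset.univ.filter fun q : Fin n × Fin n =>
      q.1 ∈ S ∧ q.2 ∈ S ∧ ¬ ∃ j, q.1 ∈ B j ∧ q.2 ∈ B j) := by
    apply Finset.filter_congr; intro q _; tauto
  rw [e1, e2, hfull] at hsplit
  linarith
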